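/- Let N ≥ 1. Then |GHZ_N⟩⟨GHZ_N| = (1/2^N) · [ Σ_{S ⊆ Fin N, |S| even} Z_S + Σ_{T ⊆ Fin N, |T| even} (−1)^{|T|/2} · W_T ], where Z_S denotes the Pauli string whose j-th factor is Z for j ∈ S and I₂ otherwise, and W_T denotes the Pauli string whose j-th factor is Y for j ∈ T and X otherwise. (Pauli-basis decomposition of the N-qubit GHZ density matrix, grouping the terms by the number of Z factors and by the even number of Y factors with sign (−1)^{|T|/2}.) -/

import Mathlib

open Matrix BigOperators

noncomputable section

def pauli : Fin 3 → Matrix (Fin 2) (Fin 2) ℂ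
  | 0 => !![0, 1; 1, 0]
  | 1 => !![0, -Complex.I; Complex.I, 0]
  | 2 => !![1, 0; 0, -1]

def outer {n : Type*} (v : n → ℂ) : Matrix n n ℂ :=
  Matrix.of fun a b => v a * (starRingEnd ℂ) (v b)

def tensorProd {N : ℕ} (A : Fin N → Matrix (Fin 2) (Fin 2) ℂ) :
    Matrix (Fin N → Fin 2) (Fin N → Fin 2) ℂ :=
  Matrix.of fun x y => ∏ j, A j (x j) (y j)

def ghz (N : ℕ) : (Fin N → Fin 2) → ℂ :=
  fun x => if x = (fun _ => 0) ∨ x = (fun _ => 1) then 1 / (Real.sqrt 2 : ℂ) else 0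

lemma fin2cases (a : Fin 2) : a = 0 ∨ a = 1 := by omega

lemma prod_neg' {N : ℕ} (s : Finset (Fin N)) (f : Fin N → ℂ) :
    ∏ i ∈ s, -f i = (-1) ^ s.card * ∏ i ∈ s, f i := by
  rw [← Finset.prod_const (-1 : ℂ), ← Finset.prod_mul_distrib]
  simp

lemma evenSum {N : ℕ} (ε : Fin N → ℂ) :
    ∑ S ∈ Finset.univ.filter (fun S : Finset (Fin N) => Even S.card), ∏ j ∈ S, ε j
      = ((∏ j, (1 + ε j)) + ∏ j, (1 - ε j)) / 2 := by
  have h1 : ∏ j, (1 + ε j) = ∑ S : Finset (Fin N), ∏ j ∈ S, ε j := by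
    simp_rw [add_comm (1 : ℂ)]
    rw [Finset.prod_add]
    simp [Finset.powerset_univ]
  have h2 : ∏ j, (1 - ε j) = ∑ S : Finset (Fin N), (-1) ^ S.card * ∏ j ∈ S, ε j := by
    simp_rw [sub_eq_neg_add]
    rw [Finset.prod_add]
    simp [Finset.powerset_univ, prod_neg']
  rw [h1, h2, Finset.sum_filter, ← Finset.sum_add_distrib, Finset.sum_div]
  refine Finset.sum_congr rfl fun S _ => ?_
  rcases Nat.even_or_odd S.card with h | h
  · rw [if_pos h, h.neg_one_pow]
    ring
  · rw [if_neg (Nat.not_even_iff_odd.mpr h), h.neg_one_pow]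
    ring

lemma sign_cancel {c : ℕ} (hc : Even c) :
    ((-1 : ℂ)) ^ (c / 2) * (-Complex.I) ^ c = 1 := by
  obtain ⟨m, hm⟩ := hc
  subst hm
  have h2 : (m + m) / 2 = m := by omega
  rw [h2, pow_add, ← mul_assoc]
  rw [show (-1 : ℂ) ^ m * (-Complex.I) ^ m = ((-1) * (-Complex.I)) ^ m by rw [mul_pow],
    ← mul_pow]
  norm_num [Complex.I_mul_I]

/-- Pauli-basis decomposition of the N-qubit GHZ density matrix:
`|GHZ_N⟩⟨GHZ_N| = (1/2^N)·[ Σ_{S even} Z_S + Σ_{T even} (−1)^{|T|/2}·W_T ]`,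
where `Z_S` is `Z` on `S` and `I₂` elsewhere, and `W_T` is `Y` on `T` and `X` elsewhere. -/
theorem ghz_pauli_decomposition {N : ℕ} (hN : 1 ≤ N) :
    outer (ghz N) = (1 / 2 ^ N : ℂ) •
      ((∑ S ∈ Finset.univ.filter (fun S : Finset (Fin N) => Even S.card),
          tensorProd (fun j => if j ∈ S then pauli 2 else 1)) +
       ∑ T ∈ Finset.univ.filter (fun T : Finset (Fin N) => Even T.card),
          ((-1 : ℂ) ^ (T.card / 2)) •
            tensorProd (fun j => if j ∈ T then pauli 1 else pauli 0)) := by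
  ext x y
  set ε : Fin N → ℂ := fun j => if x j = 0 then 1 else -1 with hεdef
  -- entry values of Pauli matrices
  have hp2 : ∀ j, pauli 2 (x j) (y j) = if x j = y j then ε j else 0 := by
    intro j
    rcases fin2cases (x j) with h | h <;> rcases fin2cases (y j) with h' | h' <;>
      simp [h, h', hεdef, pauli]
  have hp1 : ∀ j, x j ≠ y j → pauli 1 (x j) (y j) = -Complex.I * ε j := by
    intro j hj
    rcases fin2cases (x j) with h | h <;> rcases fin2cases (y j) with h' | h' <;>
      simp [h, h', hεdef, pauli] <;> simp [h, h'] at hj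
  -- closed forms for the two products
  have hA : ∏ j, (1 + ε j) = if x = (fun _ => 0) then (2 : ℂ) ^ N else 0 := by
    by_cases h0 : x = (fun _ => 0)
    · rw [if_pos h0]
      have : ∀ j, (1 : ℂ) + ε j = 2 := by
        intro j; simp [hεdef, funext_iff.mp h0 j]; norm_num
      simp [this, Finset.prod_const]
    · rw [if_neg h0]
      obtain ⟨j0, hj0⟩ := Function.ne_iff.mp h0
      refine Finset.prod_eq_zero (Finset.mem_univ j0) ?_
      simp [hεdef, hj0]
  have hB : ∏ j, (1 - ε j) = if x = (fun _ => 1) then (2 : ℂ) ^ N else 0 := by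
    by_cases h1 : x = (fun _ => 1)
    · rw [if_pos h1]
      have : ∀ j, (1 : ℂ) - ε j = 2 := by
        intro j
        simp [hεdef, funext_iff.mp h1 j]
        norm_num
      simp [this, Finset.prod_const]
    · rw [if_neg h1]
      obtain ⟨j0, hj0⟩ := Function.ne_iff.mp h1
      have hx0 : x j0 = 0 := by rcases fin2cases (x j0) with h | h; exact h; exact absurd h hj0
      refine Finset.prod_eq_zero (Finset.mem_univ j0) ?_
      simp [hεdef, hx0]
  -- the Z sum
  have hZ : (∑ S ∈ Finset.univ.filter (fun S : Finset (Fin N) => Even S.card),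
        tensorProd (fun j => if j ∈ S then pauli 2 else 1)) x y
      = if x = y then ((∏ j, (1 + ε j)) + ∏ j, (1 - ε j)) / 2 else 0 := by
    rw [Matrix.sum_apply]
    by_cases hxy : x = y
    · subst hxy
      rw [if_pos rfl, ← evenSum ε]
      refine Finset.sum_congr rfl fun S _ => ?_
      have : ∀ j, (if j ∈ S then pauli 2 else 1) (x j) (x j) = if j ∈ S then ε j else 1 := by
        intro j
        by_cases hj : j ∈ S
        · rw [if_pos hj, if_pos hj, hp2 j, if_pos rfl]
        · simp [hj, Matrix.one_apply]
      rw [show tensorProd (fun j => if j ∈ S then pauli 2 else 1) x x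
          = ∏ j, (if j ∈ S then pauli 2 else 1) (x j) (x j) from rfl]
      rw [Finset.prod_congr rfl fun j _ => this j, Finset.prod_ite_mem, Finset.univ_inter]
    · rw [if_neg hxy]
      refine Finset.sum_eq_zero fun S _ => ?_
      obtain ⟨j0, hj0⟩ := Function.ne_iff.mp hxy
      refine Finset.prod_eq_zero (Finset.mem_univ j0) ?_
      by_cases hj : j0 ∈ S
      · simp [hj, hp2, hj0]
      · simp [hj, Matrix.one_apply_ne hj0]
  -- the XY sum
  have hW : (∑ T ∈ Finset.univ.filter (fun T : Finset (Fin N) => Even T.card),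
        ((-1 : ℂ) ^ (T.card / 2)) •
          tensorProd (fun j => if j ∈ T then pauli 1 else pauli 0)) x y
      = if (∀ j, x j ≠ y j) then ((∏ j, (1 + ε j)) + ∏ j, (1 - ε j)) / 2 else 0 := by
    rw [Matrix.sum_apply]
    by_cases hf : ∀ j, x j ≠ y j
    · rw [if_pos hf, ← evenSum ε]
      refine Finset.sum_congr rfl fun T hT => ?_
      have hev : Even T.card := (Finset.mem_filter.mp hT).2
      rw [Matrix.smul_apply, smul_eq_mul]
      have : ∀ j, (if j ∈ T then pauli 1 else pauli 0) (x j) (y j)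
          = if j ∈ T then -Complex.I * ε j else 1 := by
        intro j
        by_cases hj : j ∈ T
        · simp only [hj, if_true, hp1 j (hf j)]
        · simp only [hj, if_false]
          rcases fin2cases (x j) with h | h <;> rcases fin2cases (y j) with h' | h' <;>
            first
              | (exfalso; exact hf j (h.trans h'.symm))
              | simp [h, h', pauli]
      rw [show tensorProd (fun j => if j ∈ T then pauli 1 else pauli 0) x y
          = ∏ j, (if j ∈ T then pauli 1 else pauli 0) (x j) (y j) from rfl]
      rw [Finset.prod_congr rfl fun j _ => this j, Finset.prod_ite_mem, Finset.univ_inter,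
        Finset.prod_mul_distrib, Finset.prod_const, ← mul_assoc, sign_cancel hev, one_mul]
    · rw [if_neg hf]
      push_neg at hf
      obtain ⟨j0, hj0⟩ := hf
      refine Finset.sum_eq_zero fun T _ => ?_
      rw [Matrix.smul_apply, smul_eq_mul]
      rw [show tensorProd (fun j => if j ∈ T then pauli 1 else pauli 0) x y
          = ∏ j, (if j ∈ T then pauli 1 else pauli 0) (x j) (y j) from rfl]
      rw [Finset.prod_eq_zero (Finset.mem_univ j0) ?_, mul_zero]
      rw [hj0]
      rcases fin2cases (y j0) with h | h <;> by_cases hj : j0 ∈ T <;>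
        simp [hj, h, pauli]
  rw [Matrix.smul_apply, Matrix.add_apply, hZ, hW, smul_eq_mul, hA, hB]
  -- now pure case analysis
  have hsq : (1 / (Real.sqrt 2 : ℂ)) * (starRingEnd ℂ) (1 / (Real.sqrt 2 : ℂ)) = 1 / 2 := by
    rw [map_div₀, _root_.map_one, Complex.conj_ofReal]
    rw [div_mul_div_comm, one_mul, ← Complex.ofReal_mul,
      Real.mul_self_sqrt (by norm_num)]
    norm_num
  have h2N : (2 : ℂ) ^ N ≠ 0 := pow_ne_zero _ two_ne_zero
  have hne01 : (fun _ : Fin N => (0 : Fin 2)) ≠ (fun _ => 1) := by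
    intro h
    have := funext_iff.mp h ⟨0, hN⟩
    simp at this
  show ghz N x * (starRingEnd ℂ) (ghz N y) = _
  by_cases hx0 : x = (fun _ => 0)
  · by_cases hy0 : y = (fun _ => 0)
    · have hxy : x = y := hx0.trans hy0.symm
      have hnf : ¬ (∀ j, x j ≠ y j) := fun h => h ⟨0, hN⟩ (by rw [hxy])
      rw [if_pos hxy, if_neg hnf, if_pos hx0, if_neg (hx0 ▸ hne01)]
      simp only [ghz, hx0, hy0, eq_self_iff_true, true_or, or_true, if_true]
      rw [hsq]
      field_simp
      ring
    · by_cases hy1 : y = (fun _ => 1)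
      · have hxy : x ≠ y := by rw [hx0, hy1]; exact hne01
        have hflip : ∀ j, x j ≠ y j := by
          intro j
          rw [funext_iff.mp hx0 j, funext_iff.mp hy1 j]
          decide
        rw [if_neg hxy, if_pos hflip, if_pos hx0, if_neg (hx0 ▸ hne01)]
        simp only [ghz, hx0, hy1, eq_self_iff_true, true_or, or_true, if_true]
        rw [hsq]
        field_simp
        ring
      · have hxy : x ≠ y := fun h => hy0 (h ▸ hx0)
        have hnf : ¬ (∀ j, x j ≠ y j) := by
          intro h
          obtain ⟨j0, hj0⟩ := Function.ne_iff.mp hy1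
          have hyj : y j0 = 0 := by
            rcases fin2cases (y j0) with h' | h'; exact h'; exact absurd h' hj0
          exact h j0 (by rw [funext_iff.mp hx0 j0, hyj])
        rw [if_neg hxy, if_neg hnf]
        simp [ghz, hy0, hy1]
  · by_cases hx1 : x = (fun _ => 1)
    · by_cases hy1 : y = (fun _ => 1)
      · have hxy : x = y := hx1.trans hy1.symm
        have hnf : ¬ (∀ j, x j ≠ y j) := fun h => h ⟨0, hN⟩ (by rw [hxy])
        rw [if_pos hxy, if_neg hnf, if_neg hx0, if_pos hx1]
        simp only [ghz, hx1, hy1, eq_self_iff_true, true_or, or_true, if_true]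
        rw [hsq]
        field_simp
        ring
      · by_cases hy0 : y = (fun _ => 0)
        · have hxy : x ≠ y := by
            rw [hx1, hy0]; exact fun h => hne01 h.symm
          have hflip : ∀ j, x j ≠ y j := by
            intro j
            rw [funext_iff.mp hx1 j, funext_iff.mp hy0 j]
            decide
          rw [if_neg hxy, if_pos hflip, if_neg hx0, if_pos hx1]
          simp only [ghz, hx1, hy0, eq_self_iff_true, true_or, or_true, if_true]
          rw [hsq]
          field_simp
          ring
        · have hxy : x ≠ y := fun h => hy1 (h ▸ hx1)
          have hnf : ¬ (∀ j, x j ≠ y j) := by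
            intro h
            obtain ⟨j0, hj0⟩ := Function.ne_iff.mp hy0
            have hyj : y j0 = 1 := by
              rcases fin2cases (y j0) with h' | h'; exact absurd h' hj0; exact h'
            exact h j0 (by rw [funext_iff.mp hx1 j0, hyj])
          rw [if_neg hxy, if_neg hnf]
          simp [ghz, hy0, hy1]
    · -- x not constant: both branch values are 0
      have : ((0 : ℂ) + 0) / 2 = 0 := by norm_num
      rw [if_neg hx0, if_neg hx1]
      simp only [ghz, hx0, hx1, or_self, if_false, false_or]
      by_cases hxy : x = y <;> by_cases hf : ∀ j, x j ≠ y j <;>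
        simp [hxy, hf]
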